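/- Let β, γ, u₁, u₂ ∈ ℝ, set u₂₁ = u₂ − u₁ and P(v) = v³ + 12γv − 4β², assume P(−i u₂₁) ≠ 0, and put λ = u₁² + u₂² + 2γ, S₂₁ = −P(i u₂₁)/P(−i u₂₁), R = 4√2 i β u₂₁ / P(−i u₂₁). Define f₂ : ℝ² → ℂ by f₂(x₁,x₂) = e^{i(u₂x₁+u₁x₂)} + S₂₁ e^{i(u₁x₁+u₂x₂)} and f₁ : ℝ → ℂ by f₁(x) = R e^{i(u₁+u₂)x}. Then: (i) −∂²f₂/∂x₁² − ∂²f₂/∂x₂² + 2γ f₂ = λ f₂ at every point of ℝ²; (ii) −½ f₁''(x) + 8γ f₁(x) + √2 β f₂(x,x) = λ f₁(x) for every x ∈ ℝ; (iii) 2[(∂/∂x₁ − ∂/∂x₂) f₂](x,x) + 2√2 β f₁(x) = 0 for every x ∈ ℝ. -/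

import Mathlib

lemma dexp (a b : ℂ) (x : ℝ) :
    HasDerivAt (fun t : ℝ => Complex.exp (a * t + b)) (a * Complex.exp (a * x + b)) x := by
  have h1 : HasDerivAt (fun t : ℝ => (t : ℂ)) 1 x := Complex.ofRealCLM.hasDerivAt
  have := ((h1.const_mul a).add_const b).cexp
  simpa [mul_comm] using this

lemma deriv_pair (a b c d S : ℂ) :
    deriv (fun t : ℝ => Complex.exp (a * t + b) + S * Complex.exp (c * t + d))
      = fun x : ℝ => a * Complex.exp (a * x + b) + S * (c * Complex.exp (c * x + d)) := by
  funext x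
  exact ((dexp a b x).add ((dexp c d x).const_mul S)).deriv

lemma deriv2_pair (a b c d S : ℂ) :
    deriv (deriv (fun t : ℝ => Complex.exp (a * t + b) + S * Complex.exp (c * t + d)))
      = fun x : ℝ => a * (a * Complex.exp (a * x + b)) + S * (c * (c * Complex.exp (c * x + d))) := by
  rw [deriv_pair]
  funext x
  exact (((dexp a b x).const_mul a).add (((dexp c d x).const_mul c).const_mul S)).deriv

lemma deriv2_single (a b R : ℂ) :
    deriv (deriv (fun t : ℝ => R * Complex.exp (a * t + b)))
      = fun x : ℝ => R * (a * (a * Complex.exp (a * x + b))) := by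
  have h1 : deriv (fun t : ℝ => R * Complex.exp (a * t + b))
      = fun x : ℝ => R * (a * Complex.exp (a * x + b)) := by
    funext x; exact ((dexp a b x).const_mul R).deriv
  rw [h1]
  funext x
  exact (((dexp a b x).const_mul a).const_mul R).deriv

/-- The cubic polynomial `P(v) = v³ + 12γv − 4β²`. -/
noncomputable def Pcub (β γ v : ℂ) : ℂ := v ^ 3 + 12 * γ * v - 4 * β ^ 2

theorem stmt_11 (β γ u₁ u₂ : ℝ)
    (hP : Pcub (β : ℂ) (γ : ℂ) (-(Complex.I * ((u₂ : ℂ) - (u₁ : ℂ)))) ≠ 0)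
    (lam S₂₁ R : ℂ)
    (hlam : lam = (u₁ : ℂ) ^ 2 + (u₂ : ℂ) ^ 2 + 2 * (γ : ℂ))
    (hS : S₂₁ = - Pcub (β : ℂ) (γ : ℂ) (Complex.I * ((u₂ : ℂ) - (u₁ : ℂ)))
        / Pcub (β : ℂ) (γ : ℂ) (-(Complex.I * ((u₂ : ℂ) - (u₁ : ℂ)))))
    (hR : R = 4 * (Real.sqrt 2 : ℂ) * Complex.I * (β : ℂ) * ((u₂ : ℂ) - (u₁ : ℂ))
        / Pcub (β : ℂ) (γ : ℂ) (-(Complex.I * ((u₂ : ℂ) - (u₁ : ℂ)))))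
    (f₂ : ℝ → ℝ → ℂ) (f₁ : ℝ → ℂ)
    (hf₂ : ∀ x₁ x₂ : ℝ, f₂ x₁ x₂
      = Complex.exp (Complex.I * ((u₂ : ℂ) * (x₁ : ℂ) + (u₁ : ℂ) * (x₂ : ℂ)))
        + S₂₁ * Complex.exp (Complex.I * ((u₁ : ℂ) * (x₁ : ℂ) + (u₂ : ℂ) * (x₂ : ℂ))))
    (hf₁ : ∀ x : ℝ, f₁ x = R * Complex.exp (Complex.I * ((u₁ : ℂ) + (u₂ : ℂ)) * (x : ℂ))) :
    (∀ x₁ x₂ : ℝ,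
      - deriv (deriv (fun s => f₂ s x₂)) x₁ - deriv (deriv (fun s => f₂ x₁ s)) x₂
        + 2 * (γ : ℂ) * f₂ x₁ x₂ = lam * f₂ x₁ x₂)
    ∧ (∀ x : ℝ,
      - (1 / 2) * deriv (deriv f₁) x + 8 * (γ : ℂ) * f₁ x
        + (Real.sqrt 2 : ℂ) * (β : ℂ) * f₂ x x = lam * f₁ x)
    ∧ (∀ x : ℝ,
      2 * (deriv (fun s => f₂ s x) x - deriv (fun s => f₂ x s) x)
        + 2 * (Real.sqrt 2 : ℂ) * (β : ℂ) * f₁ x = 0) := by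
  have hs2 : (Real.sqrt 2 : ℂ) * (Real.sqrt 2 : ℂ) = 2 := by
    rw [← Complex.ofReal_mul, Real.mul_self_sqrt (by norm_num)]
    norm_num
  have I2 : (Complex.I : ℂ) ^ 2 = -1 := Complex.I_sq
  set w : ℂ := (u₂ : ℂ) - (u₁ : ℂ) with hw
  have hSm : S₂₁ * Pcub (β : ℂ) (γ : ℂ) (-(Complex.I * w))
      = - Pcub (β : ℂ) (γ : ℂ) (Complex.I * w) := by
    rw [hS]; field_simp
  have hRm : R * Pcub (β : ℂ) (γ : ℂ) (-(Complex.I * w))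
      = 4 * (Real.sqrt 2 : ℂ) * Complex.I * (β : ℂ) * w := by
    rw [hR]; field_simp
  simp only [Pcub] at hSm hRm hP
  have key2 : -(1 / 2) * (Complex.I * ((u₁ : ℂ) + u₂))^2 * R + 8 * (γ : ℂ) * R
      + (Real.sqrt 2 : ℂ) * (β : ℂ) * (1 + S₂₁)
      = ((u₁ : ℂ)^2 + (u₂ : ℂ)^2 + 2 * γ) * R := by
    apply mul_right_cancel₀ hP
    linear_combination (-(1/2) * (Complex.I * ((u₁:ℂ) + u₂))^2 + 8 * (γ:ℂ)
        - ((u₁:ℂ)^2 + (u₂:ℂ)^2 + 2*(γ:ℂ))) * hRm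
      + (Real.sqrt 2 : ℂ) * (β : ℂ) * hSm
      + (-2 * (Real.sqrt 2 : ℂ) * Complex.I * (β:ℂ) * w * (((u₁:ℂ)+u₂)^2 + w^2)) * I2
  have key3 : 2 * Complex.I * w * (1 - S₂₁)
      + 2 * (Real.sqrt 2 : ℂ) * (β : ℂ) * R = 0 := by
    apply mul_right_cancel₀ hP
    linear_combination (-2 * Complex.I * w) * hSm
      + (2 * (Real.sqrt 2 : ℂ) * (β : ℂ)) * hRm
      + (8 * Complex.I * (β:ℂ)^2 * w) * hs2
  have hfix₁ : ∀ x₂ : ℝ, (fun s : ℝ => f₂ s x₂)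
      = fun s : ℝ => Complex.exp (Complex.I * u₂ * s + Complex.I * u₁ * x₂)
        + S₂₁ * Complex.exp (Complex.I * u₁ * s + Complex.I * u₂ * x₂) := by
    intro x₂; funext s; rw [hf₂]; ring_nf
  have hfix₂ : ∀ x₁ : ℝ, (fun s : ℝ => f₂ x₁ s)
      = fun s : ℝ => Complex.exp (Complex.I * u₁ * s + Complex.I * u₂ * x₁)
        + S₂₁ * Complex.exp (Complex.I * u₂ * s + Complex.I * u₁ * x₁) := by
    intro x₁; funext s; rw [hf₂]; ring_nf
  have hf₁' : f₁ = fun x : ℝ =>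
      R * Complex.exp (Complex.I * ((u₁ : ℂ) + (u₂ : ℂ)) * x + 0) := by
    funext x; rw [hf₁]; ring_nf
  refine ⟨?_, ?_, ?_⟩
  · intro x₁ x₂
    rw [hfix₁ x₂, hfix₂ x₁, deriv2_pair, deriv2_pair, hf₂, hlam]
    linear_combination (norm := ring_nf)
      (-((u₁:ℂ)^2 + (u₂:ℂ)^2)) *
        (Complex.exp (Complex.I * (u₂:ℂ) * (x₁:ℂ) + Complex.I * (u₁:ℂ) * (x₂:ℂ))
          + S₂₁ * Complex.exp (Complex.I * (u₁:ℂ) * (x₁:ℂ) + Complex.I * (u₂:ℂ) * (x₂:ℂ))) * I2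
  · intro x
    rw [hf₁', deriv2_single, hf₂, hlam]
    linear_combination (norm := ring_nf)
      Complex.exp (Complex.I * ((u₁:ℂ) + (u₂:ℂ)) * (x:ℂ) + 0) * key2
  · intro x
    rw [hfix₁ x, hfix₂ x, deriv_pair, deriv_pair, hf₁ x]
    linear_combination (norm := ring_nf)
      Complex.exp (Complex.I * ((u₁:ℂ) + (u₂:ℂ)) * (x:ℂ)) * key3
        - 2 * Complex.I * Complex.exp (Complex.I * ((u₁:ℂ) + (u₂:ℂ)) * (x:ℂ)) * (1 - S₂₁) * hw
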